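/- Let G be a finite connected simple Hamiltonian graph on n ≥ 3 vertices with constant resistance curvature K (i.e., κ_i = K for all vertices i solves Ω κ = 1). Then K ≥ 6/(n²−1), the constant curvature of the cycle graph C_n. -/

import Mathlib

open Finset SimpleGraph Matrix

/-- The resistance matrix of a graph: `Ω i j = Γ⁻¹ i i + Γ⁻¹ j j - 2 Γ⁻¹ i j`
where `Γ = L + (1/n) J` with `L` the Laplacian and `J` the all-ones matrix. -/
noncomputable def resistanceMatrix {V : Type*} [Fintype V] [DecidableEq V]
    (G : SimpleGraph V) [DecidableRel G.Adj] : Matrix V V ℝ :=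
  Matrix.of fun i j =>
    letI Γinv := (G.lapMatrix ℝ + Matrix.of fun _ _ => (1 : ℝ) / Fintype.card V)⁻¹
    Γinv i i + Γinv j j - 2 * Γinv i j

/- Auxiliary: the `i`-th element of the support of a walk is `getVert i`. -/
lemma walk_support_getElem {V : Type*} {G : SimpleGraph V} {u v : V} (p : G.Walk u v) :
    ∀ (i : ℕ) (h : i < p.support.length), p.support[i] = p.getVert i := by
  induction p with
  | nil =>
      intro i h
      simp only [SimpleGraph.Walk.support_nil, List.length_singleton] at h
      interval_cases i
      simp [SimpleGraph.Walk.getVert]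
  | cons hadj q ih =>
      intro i h
      cases i with
      | zero => simp [SimpleGraph.Walk.support_cons]
      | succ i =>
          simp only [SimpleGraph.Walk.support_cons, List.getElem_cons_succ,
            SimpleGraph.Walk.getVert_cons_succ]
          exact ih i (by simpa [SimpleGraph.Walk.support_cons] using h)

/- Auxiliary: sum of `r` over `range m`, real version. -/
lemma sum_range_real (m : ℕ) : ∑ r ∈ Finset.range m, (r : ℝ) = m * (m - 1) / 2 := by
  induction m with
  | zero => simp
  | succ m ih => rw [Finset.sum_range_succ, ih]; push_cast; ring

/- Auxiliary: sum of `r²` over `range m`, real version. -/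
lemma sum_range_sq_real (m : ℕ) :
    ∑ r ∈ Finset.range m, (r : ℝ) ^ 2 = m * (m - 1) * (2 * m - 1) / 6 := by
  induction m with
  | zero => simp
  | succ m ih => rw [Finset.sum_range_succ, ih]; push_cast; ring

set_option maxHeartbeats 2000000 in
/-- A connected Hamiltonian graph on `n ≥ 3` vertices with constant resistance
curvature `K` satisfies `K ≥ 6/(n²-1)`, the constant curvature of the cycle `C n`. -/
theorem hamiltonian_constant_curvature_ge_cycle
    {V : Type*} [Fintype V] [DecidableEq V]
    (G : SimpleGraph V) [DecidableRel G.Adj]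
    (hconn : G.Connected) (hn : 3 ≤ Fintype.card V)
    (hham : G.IsHamiltonian)
    (K : ℝ) (hκ : resistanceMatrix G *ᵥ (fun _ => K) = fun _ => 1) :
    K ≥ 6 / ((Fintype.card V : ℝ) ^ 2 - 1) := by
  classical
  set n := Fintype.card V with hn'
  haveI : NeZero n := ⟨by omega⟩
  haveI : Fact (1 < n) := ⟨by omega⟩
  have hnR : (3 : ℝ) ≤ (n : ℝ) := by exact_mod_cast hn
  set Γ : Matrix V V ℝ := G.lapMatrix ℝ + Matrix.of fun _ _ => (1 : ℝ) / n with hΓdef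
  -- quadratic form facts
  have hLquad : ∀ x : V → ℝ, x ⬝ᵥ (G.lapMatrix ℝ *ᵥ x) =
      (∑ i, ∑ j, if G.Adj i j then (x i - x j) ^ 2 else 0) / 2 := by
    intro x
    rw [← Matrix.toLinearMap₂'_apply', SimpleGraph.lapMatrix_toLinearMap₂']
  have hJquad : ∀ x : V → ℝ,
      x ⬝ᵥ ((Matrix.of fun _ _ => (1 : ℝ) / n) *ᵥ x) = (∑ i, x i) ^ 2 / n := by
    intro x
    simp only [dotProduct, Matrix.mulVec, Matrix.of_apply]
    rw [← Finset.mul_sum, ← Finset.sum_mul]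
    ring
  have hΓquad : ∀ x : V → ℝ, x ⬝ᵥ (Γ *ᵥ x) =
      x ⬝ᵥ (G.lapMatrix ℝ *ᵥ x) + (∑ i, x i) ^ 2 / n := by
    intro x
    rw [hΓdef, Matrix.add_mulVec, dotProduct_add, hJquad]
  have hsymΓ : Γᵀ = Γ := by
    rw [hΓdef, Matrix.transpose_add, (SimpleGraph.isSymm_lapMatrix ℝ G).eq]
    congr 1
  have hΓpd : Γ.PosDef := by
    refine Matrix.posDef_iff_dotProduct_mulVec.mpr ⟨?_, ?_⟩
    · rw [Matrix.IsHermitian, Matrix.conjTranspose_eq_transpose_of_trivial]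
      exact hsymΓ
    · intro x hx
      rw [star_trivial, hΓquad]
      have h1 : 0 ≤ x ⬝ᵥ (G.lapMatrix ℝ *ᵥ x) := by
        have := (SimpleGraph.posSemidef_lapMatrix ℝ G).dotProduct_mulVec_nonneg x
        rwa [star_trivial] at this
      have hkey : x ⬝ᵥ (G.lapMatrix ℝ *ᵥ x) = 0 → (∑ i, x i) = 0 → False := by
        intro hL hs
        have hconst : ∀ i j : V, x i = x j := by
          intro i j
          exact (SimpleGraph.lapMatrix_toLinearMap₂'_apply'_eq_zero_iff_forall_reachable G x).mp
            (by rw [Matrix.toLinearMap₂'_apply']; exact hL) i j (hconn.preconnected i j)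
        have hne : Nonempty V := Fintype.card_pos_iff.mp (by omega)
        obtain ⟨i₀⟩ := hne
        have hxi : ∀ i, x i = x i₀ := fun i => hconst i i₀
        have : (∑ i, x i) = n * x i₀ := by
          rw [Finset.sum_congr rfl (fun i _ => hxi i)]
          simp [Finset.sum_const, hn', mul_comm]
        have hx0 : x i₀ = 0 := by
          rw [this] at hs
          have hn0 : (n : ℝ) ≠ 0 := by positivity
          rcases mul_eq_zero.mp hs with h | h
          · exact absurd h hn0
          · exact h
        exact hx (funext fun i => by rw [hxi i, hx0]; simp)
      rcases h1.lt_or_eq with h | h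
      · have : 0 ≤ (∑ i, x i) ^ 2 / n := by positivity
        linarith
      · have hs : (∑ i, x i) ≠ 0 := fun hs => hkey h.symm hs
        have : 0 < (∑ i, x i) ^ 2 / n := by positivity
        linarith
  have hdet : IsUnit Γ.det := isUnit_iff_ne_zero.mpr hΓpd.det_pos.ne'
  have hGiv : Γ * Γ⁻¹ = 1 := Matrix.mul_nonsing_inv _ hdet
  have hsymInv : (Γ⁻¹)ᵀ = Γ⁻¹ := by
    rw [Matrix.transpose_nonsing_inv, hsymΓ]
  have hInvPSD : ∀ y : V → ℝ, 0 ≤ y ⬝ᵥ (Γ⁻¹ *ᵥ y) := by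
    intro y
    have := hΓpd.inv.posSemidef.dotProduct_mulVec_nonneg y
    rwa [star_trivial] at this
  -- resistance entries as quadratic form of Γ⁻¹
  have hres : ∀ i j : V, resistanceMatrix G i j =
      (fun v => (if v = i then (1:ℝ) else 0) - (if v = j then 1 else 0)) ⬝ᵥ
        (Γ⁻¹ *ᵥ (fun v => (if v = i then (1:ℝ) else 0) - (if v = j then 1 else 0))) := by
    intro i j
    have hmv : (Γ⁻¹ *ᵥ (fun v => (if v = i then (1:ℝ) else 0) - (if v = j then 1 else 0)))
        = fun v => Γ⁻¹ v i - Γ⁻¹ v j := by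
      funext v
      simp [Matrix.mulVec, dotProduct, mul_sub, mul_ite, Finset.sum_sub_distrib]
    rw [hmv]
    have hji : Γ⁻¹ j i = Γ⁻¹ i j := by
      conv_lhs => rw [← hsymInv]
      rfl
    simp only [resistanceMatrix, Matrix.of_apply, dotProduct, sub_mul, ite_mul, one_mul,
      zero_mul, Finset.sum_sub_distrib, Finset.sum_ite_eq', Finset.mem_univ, if_true]
    rw [← hn', ← hΓdef, hji]
    ring
  have hresnn : ∀ i j : V, 0 ≤ resistanceMatrix G i j := by
    intro i j
    rw [hres]
    exact hInvPSD _
  -- extract Hamiltonian cycle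
  obtain ⟨a, p, hp⟩ := hham (by omega)
  have hlen : p.length = n := by rw [hp.length_eq, hn']
  set ψ : ZMod n → V := fun k => p.getVert k.val with hψ
  have hval_add_one : ∀ k : ZMod n, (k + 1).val = if k.val = n - 1 then 0 else k.val + 1 := by
    intro k
    rw [ZMod.val_add, ZMod.val_one]
    have hk := ZMod.val_lt k
    split_ifs with h
    · rw [h, Nat.sub_add_cancel (by omega), Nat.mod_self]
    · exact Nat.mod_eq_of_lt (by omega)
  have hgetn : p.getVert n = p.getVert 0 := by
    rw [← hlen, SimpleGraph.Walk.getVert_length, SimpleGraph.Walk.getVert_zero]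
  have hadj : ∀ k : ZMod n, G.Adj (ψ k) (ψ (k + 1)) := by
    intro k
    have hk := ZMod.val_lt k
    show G.Adj (p.getVert k.val) (p.getVert (k + 1).val)
    by_cases h : k.val = n - 1
    · have h1 : (k + 1).val = 0 := by rw [hval_add_one k, if_pos h]
      rw [h1, h, ← hgetn]
      have := p.adj_getVert_succ (i := n - 1) (by omega)
      rwa [show n - 1 + 1 = n by omega] at this
    · rw [hval_add_one k, if_neg h]
      exact p.adj_getVert_succ (by omega)
  -- injectivity of ψ
  have hsuplen : p.support.length = n + 1 := by
    rw [SimpleGraph.Walk.length_support, hlen]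
  have htaillen : p.support.tail.length = n := by
    rw [List.length_tail, hsuplen]
    omega
  have hnodup : p.support.tail.Nodup := hp.isCycle.support_nodup
  have htget : ∀ (i : ℕ) (h : i < n),
      p.support.tail[i]'(by rw [htaillen]; exact h) = p.getVert (i + 1) := by
    intro i h
    rw [List.getElem_tail, walk_support_getElem]
  have hgv_inj : ∀ (m m' : ℕ), m < n → m' < n → p.getVert m = p.getVert m' → m = m' := by
    intro m m' hm hm' hkk
    by_cases h0 : m = 0 <;> by_cases h0' : m' = 0
    · omega
    · exfalso
      have e1 : p.support.tail[n - 1]'(by rw [htaillen]; omega) =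
          p.support.tail[m' - 1]'(by rw [htaillen]; omega) := by
        rw [htget (n - 1) (by omega), htget (m' - 1) (by omega),
          show n - 1 + 1 = n by omega, Nat.sub_add_cancel (by omega), hgetn, ← h0]
        exact hkk
      have := (List.Nodup.getElem_inj_iff hnodup).mp e1
      omega
    · exfalso
      have e1 : p.support.tail[n - 1]'(by rw [htaillen]; omega) =
          p.support.tail[m - 1]'(by rw [htaillen]; omega) := by
        rw [htget (n - 1) (by omega), htget (m - 1) (by omega),
          show n - 1 + 1 = n by omega, Nat.sub_add_cancel (by omega), hgetn, ← h0']
        exact hkk.symm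
      have := (List.Nodup.getElem_inj_iff hnodup).mp e1
      omega
    · have e1 : p.support.tail[m - 1]'(by rw [htaillen]; omega) =
          p.support.tail[m' - 1]'(by rw [htaillen]; omega) := by
        rw [htget (m - 1) (by omega), htget (m' - 1) (by omega),
          Nat.sub_add_cancel (by omega), Nat.sub_add_cancel (by omega)]
        exact hkk
      have := (List.Nodup.getElem_inj_iff hnodup).mp e1
      omega
  have hinj : Function.Injective ψ := by
    intro k k' hkk
    exact ZMod.val_injective n (hgv_inj k.val k'.val (ZMod.val_lt k) (ZMod.val_lt k') hkk)
  have hbij : Function.Bijective ψ :=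
    (Fintype.bijective_iff_injective_and_card ψ).mpr ⟨hinj, by rw [ZMod.card, hn']⟩
  -- per-t bound
  have hbound : ∀ t : ZMod n,
      resistanceMatrix G (ψ 0) (ψ t) ≤ (t.val : ℝ) * ((n : ℝ) - t.val) / n := by
    intro t
    by_cases ht : t = 0
    · subst ht
      have : resistanceMatrix G (ψ 0) (ψ 0) = 0 := by
        simp only [resistanceMatrix, Matrix.of_apply]
        ring
      rw [this, ZMod.val_zero]
      simp
    · set d := t.val with hd
      have hd1 : 1 ≤ d := by
        rcases Nat.eq_zero_or_pos d with h | h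
        · exact absurd ((ZMod.val_eq_zero t).mp h) ht
        · omega
      have hdn : d < n := ZMod.val_lt t
      set e : V → ℝ := fun v => (if v = ψ 0 then 1 else 0) - (if v = ψ t then 1 else 0)
        with he
      set x : V → ℝ := Γ⁻¹ *ᵥ e with hx
      have hres0 : resistanceMatrix G (ψ 0) (ψ t) = e ⬝ᵥ x := hres _ _
      have hΓx : Γ *ᵥ x = e := by
        rw [hx, Matrix.mulVec_mulVec, hGiv, Matrix.one_mulVec]
      have h1 : e ⬝ᵥ x = x (ψ 0) - x (ψ t) := by
        simp [he, dotProduct, sub_mul, Finset.sum_sub_distrib]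
      have hxe : x ⬝ᵥ (Γ *ᵥ x) = e ⬝ᵥ x := by
        rw [hΓx, dotProduct_comm]
      -- the current
      set g : ZMod n → ℝ := fun k => if k.val < d then ((n : ℝ) - d) / n else -(d : ℝ) / n
        with hg
      have hnR0 : (0 : ℝ) < n := by positivity
      -- step function of g
      have hcastval : ∀ k : ZMod n, ((k.val : ℕ) : ZMod n) = k := by
        intro k
        rw [ZMod.natCast_val, ZMod.cast_id]
      have hsubval : ∀ k : ZMod n, k ≠ 0 → (k - 1).val = k.val - 1 := by
        intro k hk0
        have hkv : 1 ≤ k.val := by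
          rcases Nat.eq_zero_or_pos k.val with h | h
          · exact absurd ((ZMod.val_eq_zero k).mp h) hk0
          · omega
        have : k - 1 = ((k.val - 1 : ℕ) : ZMod n) := by
          rw [Nat.cast_sub hkv, hcastval, Nat.cast_one]
        rw [this, ZMod.val_cast_of_lt (by have := ZMod.val_lt k; omega)]
      have hneg1 : ((0 : ZMod n) - 1).val = n - 1 := by
        have : (0 : ZMod n) - 1 = ((n - 1 : ℕ) : ZMod n) := by
          rw [Nat.cast_sub (by omega), ZMod.natCast_self, Nat.cast_one]
        rw [this, ZMod.val_cast_of_lt (by omega)]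
      have hstep : ∀ k : ZMod n, g k - g (k - 1) =
          (if k = 0 then (1 : ℝ) else 0) - (if k = t then 1 else 0) := by
        intro k
        by_cases hk0 : k = 0
        · have hgl : g k = ((n : ℝ) - d) / n := by
            simp only [hg, hk0, ZMod.val_zero]
            rw [if_pos (by omega)]
          have hgr : g (k - 1) = -(d : ℝ) / n := by
            simp only [hg, hk0, hneg1]
            rw [if_neg (by omega)]
          rw [hgl, hgr, if_pos hk0, if_neg (by rw [hk0]; exact fun h => ht h.symm)]
          field_simp
          ring
        · have hsv := hsubval k hk0
          have hkv : 1 ≤ k.val := by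
            rcases Nat.eq_zero_or_pos k.val with h | h
            · exact absurd ((ZMod.val_eq_zero k).mp h) hk0
            · omega
          by_cases hkt : k = t
          · have hvd : k.val = d := by rw [hkt]
            have hgl : g k = -(d : ℝ) / n := by
              simp only [hg]
              rw [if_neg (by omega)]
            have hgr : g (k - 1) = ((n : ℝ) - d) / n := by
              simp only [hg, hsv, hvd]
              rw [if_pos (by omega)]
            rw [hgl, hgr, if_neg hk0, if_pos hkt]
            field_simp
            ring
          · have hvd : k.val ≠ d := fun h => hkt (ZMod.val_injective n (by rw [h]))
            rw [if_neg hk0, if_neg hkt]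
            rcases Nat.lt_or_ge k.val d with h | h
            · have hgl : g k = ((n : ℝ) - d) / n := by
                simp only [hg]; rw [if_pos h]
              have hgr : g (k - 1) = ((n : ℝ) - d) / n := by
                simp only [hg, hsv]; rw [if_pos (by omega)]
              rw [hgl, hgr]; ring
            · have hgl : g k = -(d : ℝ) / n := by
                simp only [hg]; rw [if_neg (by omega)]
              have hgr : g (k - 1) = -(d : ℝ) / n := by
                simp only [hg, hsv]; rw [if_neg (by omega)]
              rw [hgl, hgr]; ring
      -- summation by parts
      have hparts : ∀ y : V → ℝ,
          (∑ k : ZMod n, (y (ψ k) - y (ψ (k + 1))) * g k) = y (ψ 0) - y (ψ t) := by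
        intro y
        have hshift : (∑ k : ZMod n, y (ψ (k + 1)) * g k)
            = ∑ k : ZMod n, y (ψ k) * g (k - 1) := by
          apply Fintype.sum_equiv (Equiv.addRight (1 : ZMod n))
          intro k
          simp [Equiv.coe_addRight, add_sub_cancel_right]
        calc (∑ k : ZMod n, (y (ψ k) - y (ψ (k + 1))) * g k)
            = (∑ k : ZMod n, y (ψ k) * g k) - ∑ k : ZMod n, y (ψ (k + 1)) * g k := by
              rw [← Finset.sum_sub_distrib]
              exact Finset.sum_congr rfl fun k _ => by ring
          _ = ∑ k : ZMod n, y (ψ k) * (g k - g (k - 1)) := by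
              rw [hshift, ← Finset.sum_sub_distrib]
              exact Finset.sum_congr rfl fun k _ => by ring
          _ = ∑ k : ZMod n, (y (ψ k) * (if k = 0 then (1:ℝ) else 0)
                - y (ψ k) * (if k = t then 1 else 0)) := by
              exact Finset.sum_congr rfl fun k _ => by rw [hstep k]; ring
          _ = y (ψ 0) - y (ψ t) := by
              rw [Finset.sum_sub_distrib]
              simp [mul_ite]
      -- energy of the current
      have hgsq : (∑ k : ZMod n, g k ^ 2) = (d : ℝ) * ((n : ℝ) - d) / n := by
        have hre : (∑ k : ZMod n, g k ^ 2) =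
            ∑ r ∈ Finset.range n, (if r < d then ((n : ℝ) - d) / n else -(d : ℝ) / n) ^ 2 := by
          apply Finset.sum_nbij' (i := fun k : ZMod n => k.val)
            (j := fun r : ℕ => (r : ZMod n))
          · intro k _; exact Finset.mem_range.mpr (ZMod.val_lt k)
          · intro r _; exact Finset.mem_univ _
          · intro k _; exact hcastval k
          · intro r hr; exact ZMod.val_cast_of_lt (Finset.mem_range.mp hr)
          · intro k _; rw [hg]
        rw [hre, ← Finset.sum_range_add_sum_Ico _ (le_of_lt hdn)]
        have e1 : ∑ r ∈ Finset.range d,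
            (if r < d then ((n : ℝ) - d) / n else -(d : ℝ) / n) ^ 2
            = d * (((n : ℝ) - d) / n) ^ 2 := by
          calc ∑ r ∈ Finset.range d,
              (if r < d then ((n : ℝ) - d) / n else -(d : ℝ) / n) ^ 2
              = ∑ _r ∈ Finset.range d, (((n : ℝ) - d) / n) ^ 2 :=
                Finset.sum_congr rfl fun r hr => by rw [if_pos (Finset.mem_range.mp hr)]
            _ = d * (((n : ℝ) - d) / n) ^ 2 := by
                rw [Finset.sum_const, Finset.card_range, nsmul_eq_mul]
        have e2 : ∑ r ∈ Finset.Ico d n,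
            (if r < d then ((n : ℝ) - d) / n else -(d : ℝ) / n) ^ 2
            = ((n : ℝ) - d) * ((d : ℝ) / n) ^ 2 := by
          calc ∑ r ∈ Finset.Ico d n,
              (if r < d then ((n : ℝ) - d) / n else -(d : ℝ) / n) ^ 2
              = ∑ _r ∈ Finset.Ico d n, ((d : ℝ) / n) ^ 2 :=
                Finset.sum_congr rfl fun r hr => by
                  rw [if_neg (by have := (Finset.mem_Ico.mp hr).1; omega)]
                  ring
            _ = ((n : ℝ) - d) * ((d : ℝ) / n) ^ 2 := by
                rw [Finset.sum_const, Nat.card_Ico, nsmul_eq_mul, Nat.cast_sub hdn.le]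
        rw [e1, e2]
        have hdR : (0:ℝ) ≤ (d:ℝ) := by positivity
        field_simp
        ring
      -- energy comparison (Rayleigh)
      have henergy : (∑ k : ZMod n, (x (ψ k) - x (ψ (k + 1))) ^ 2) ≤ x ⬝ᵥ (Γ *ᵥ x) := by
        rw [hΓquad, hLquad]
        have h2 : 0 ≤ (∑ i, x i) ^ 2 / n := by positivity
        have hmain : 2 * (∑ k : ZMod n, (x (ψ k) - x (ψ (k + 1))) ^ 2) ≤
            (∑ i, ∑ j, if G.Adj i j then (x i - x j) ^ 2 else 0) := by
          set F : ZMod n × Bool → V × V := fun kb =>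
            if kb.2 then (ψ (kb.1 + 1), ψ kb.1) else (ψ kb.1, ψ (kb.1 + 1)) with hF
          have h2ne : (2 : ZMod n) ≠ 0 := by
            have : ((2 : ℕ) : ZMod n) ≠ 0 := by
              rw [Ne, ZMod.natCast_eq_zero_iff]
              intro hdvd
              have := Nat.le_of_dvd (by norm_num) hdvd
              omega
            simpa using this
          have hFinj : ∀ q ∈ (Finset.univ : Finset (ZMod n × Bool)),
              ∀ q' ∈ (Finset.univ : Finset (ZMod n × Bool)), F q = F q' → q = q' := by
            rintro ⟨k, b⟩ - ⟨k', b'⟩ - hqq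
            cases b <;> cases b'
            · have hq : (ψ k, ψ (k + 1)) = (ψ k', ψ (k' + 1)) := hqq
              rw [Prod.mk.injEq] at hq
              exact Prod.ext (hinj hq.1) rfl
            · exfalso
              have hq : (ψ k, ψ (k + 1)) = (ψ (k' + 1), ψ k') := hqq
              rw [Prod.mk.injEq] at hq
              have e1 : k = k' + 1 := hinj hq.1
              have e2 : k + 1 = k' := hinj hq.2
              apply h2ne
              linear_combination e2 - e1
            · exfalso
              have hq : (ψ (k + 1), ψ k) = (ψ k', ψ (k' + 1)) := hqq
              rw [Prod.mk.injEq] at hq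
              have e1 : k + 1 = k' := hinj hq.1
              have e2 : k = k' + 1 := hinj hq.2
              apply h2ne
              linear_combination e1 - e2
            · have hq : (ψ (k + 1), ψ k) = (ψ (k' + 1), ψ k') := hqq
              rw [Prod.mk.injEq] at hq
              exact Prod.ext (hinj hq.2) rfl
          have himg : ∀ q ∈ Finset.image F Finset.univ, G.Adj q.1 q.2 := by
            intro q hq
            obtain ⟨kb, -, rfl⟩ := Finset.mem_image.mp hq
            rcases kb with ⟨k, b⟩
            cases b
            · exact hadj k
            · exact (hadj k).symm
          calc 2 * (∑ k : ZMod n, (x (ψ k) - x (ψ (k + 1))) ^ 2)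
              = ∑ q : ZMod n × Bool, (x (F q).1 - x (F q).2) ^ 2 := by
                rw [Fintype.sum_prod_type]
                rw [Finset.mul_sum]
                refine Finset.sum_congr rfl fun k _ => ?_
                rw [Fintype.sum_bool]
                show 2 * (x (ψ k) - x (ψ (k + 1))) ^ 2
                    = (x (ψ (k + 1)) - x (ψ k)) ^ 2 + (x (ψ k) - x (ψ (k + 1))) ^ 2
                ring
            _ = ∑ q ∈ Finset.image F Finset.univ, (x q.1 - x q.2) ^ 2 := by
                rw [Finset.sum_image (f := fun q : V × V => (x q.1 - x q.2) ^ 2) hFinj]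
            _ = ∑ q ∈ Finset.image F Finset.univ,
                  (if G.Adj q.1 q.2 then (x q.1 - x q.2) ^ 2 else 0) := by
                refine Finset.sum_congr rfl fun q hq => ?_
                rw [if_pos (himg q hq)]
            _ ≤ ∑ q : V × V, (if G.Adj q.1 q.2 then (x q.1 - x q.2) ^ 2 else 0) := by
                apply Finset.sum_le_sum_of_subset_of_nonneg (Finset.subset_univ _)
                intro q _ _
                positivity
            _ = ∑ i, ∑ j, if G.Adj i j then (x i - x j) ^ 2 else 0 := by
                rw [Fintype.sum_prod_type]
        linarith
      -- combine
      have hDxg := hparts x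
      have hfin : e ⬝ᵥ x ≤ (d : ℝ) * ((n : ℝ) - d) / n := by
        have step1 : e ⬝ᵥ x = 2 * (∑ k : ZMod n, (x (ψ k) - x (ψ (k + 1))) * g k)
            - x ⬝ᵥ (Γ *ᵥ x) := by
          rw [hDxg, ← h1, hxe]; ring
        have step2 : 2 * (∑ k : ZMod n, (x (ψ k) - x (ψ (k + 1))) * g k)
            - x ⬝ᵥ (Γ *ᵥ x) ≤
            2 * (∑ k : ZMod n, (x (ψ k) - x (ψ (k + 1))) * g k)
            - ∑ k : ZMod n, (x (ψ k) - x (ψ (k + 1))) ^ 2 := by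
          linarith [henergy]
        have step3 : 2 * (∑ k : ZMod n, (x (ψ k) - x (ψ (k + 1))) * g k)
            - (∑ k : ZMod n, (x (ψ k) - x (ψ (k + 1))) ^ 2) ≤ ∑ k : ZMod n, g k ^ 2 := by
          have : ∀ k : ZMod n, 2 * ((x (ψ k) - x (ψ (k + 1))) * g k)
              - (x (ψ k) - x (ψ (k + 1))) ^ 2 ≤ g k ^ 2 := by
            intro k
            nlinarith [sq_nonneg (x (ψ k) - x (ψ (k + 1)) - g k)]
          calc 2 * (∑ k : ZMod n, (x (ψ k) - x (ψ (k + 1))) * g k)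
              - (∑ k : ZMod n, (x (ψ k) - x (ψ (k + 1))) ^ 2)
              = ∑ k : ZMod n, (2 * ((x (ψ k) - x (ψ (k + 1))) * g k)
                  - (x (ψ k) - x (ψ (k + 1))) ^ 2) := by
                rw [Finset.sum_sub_distrib, Finset.mul_sum]
            _ ≤ ∑ k : ZMod n, g k ^ 2 := Finset.sum_le_sum fun k _ => this k
          
        rw [← hgsq]
        linarith [step1, step2, step3]
      rw [hres0]
      exact hfin
  -- assemble
  set i₀ := ψ 0 with hi₀
  have hrow := congrFun hκ i₀
  have hKS : (∑ j, resistanceMatrix G i₀ j) * K = 1 := by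
    rw [Finset.sum_mul]
    simpa [Matrix.mulVec, dotProduct] using hrow
  set S := ∑ j, resistanceMatrix G i₀ j with hS
  have hS_nonneg : 0 ≤ S := Finset.sum_nonneg fun j _ => hresnn i₀ j
  have hS_pos : 0 < S := by
    rcases hS_nonneg.lt_or_eq with h | h
    · exact h
    · exfalso; rw [← h] at hKS; simp at hKS
  have hsum_range : ∑ r ∈ Finset.range n, (r : ℝ) * ((n : ℝ) - r) / n
      = ((n : ℝ) ^ 2 - 1) / 6 := by
    have expand : ∀ r : ℕ, (r : ℝ) * ((n : ℝ) - r) / n = ((n : ℝ) * r - (r : ℝ) ^ 2) / n :=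
      fun r => by ring
    rw [Finset.sum_congr rfl fun r _ => expand r, ← Finset.sum_div,
      Finset.sum_sub_distrib, ← Finset.mul_sum, sum_range_real, sum_range_sq_real]
    have hnne : (n : ℝ) ≠ 0 := by positivity
    field_simp
    ring
  have hS_le : S ≤ ((n : ℝ) ^ 2 - 1) / 6 := by
    have hreindex : S = ∑ t : ZMod n, resistanceMatrix G i₀ (ψ t) :=
      (Fintype.sum_bijective ψ hbij _ _ fun t => rfl).symm
    have hsum_bound : (∑ t : ZMod n, resistanceMatrix G i₀ (ψ t))
        ≤ ∑ t : ZMod n, (t.val : ℝ) * ((n : ℝ) - t.val) / n :=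
      Finset.sum_le_sum fun t _ => hbound t
    have hval_sum : (∑ t : ZMod n, (t.val : ℝ) * ((n : ℝ) - t.val) / n)
        = ∑ r ∈ Finset.range n, (r : ℝ) * ((n : ℝ) - r) / n := by
      apply Finset.sum_nbij' (i := fun k : ZMod n => k.val) (j := fun r : ℕ => (r : ZMod n))
      · intro k _; exact Finset.mem_range.mpr (ZMod.val_lt k)
      · intro r _; exact Finset.mem_univ _
      · intro k _; rw [ZMod.natCast_val, ZMod.cast_id]
      · intro r hr; exact ZMod.val_cast_of_lt (Finset.mem_range.mp hr)
      · intro k _; rfl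
    rw [hreindex]
    rw [hval_sum, hsum_range] at hsum_bound
    exact hsum_bound
  have hden : (0 : ℝ) < (n : ℝ) ^ 2 - 1 := by nlinarith
  have hK : K = 1 / S := by
    rw [eq_div_iff hS_pos.ne']
    linarith [hKS]
  rw [ge_iff_le, hK, div_le_div_iff₀ hden hS_pos]
  linarith [hS_le]
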